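/- For parameters (w,x,y,a,b,c) in K^6 define F(w,x,y,a,b,c) to be the 4x3 matrix with rows (-3*a*x, -b*y, 0), (a*w, 0, c*y), (0, b*w, -3*c*x), (-a*y, b*x, c*w). Suppose (w,x,y,a,b,c) and (w',x',y',a',b',c') both satisfy w^2+3*x^2+y^2 = 1 and a*b*c - a - b - c = 0, that (a,b,c) ≠ (0,0,0), and that F(w,x,y,a,b,c) = F(w',x',y',a',b',c'). Then either (w',x',y',a',b',c') = (w,x,y,a,b,c) or (w',x',y',a',b',c') = (-w,-x,-y,-a,-b,-c). -/
import Mathlib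


open Matrix

private lemma auxA {K : Type*} [Field K] {w x y t w' x' y' t' : K}
    (h1 : w^2 + 3*x^2 + y^2 = 1) (h1' : w'^2 + 3*x'^2 + y'^2 = 1)
    (ht : t ≠ 0) (ew : t*w = t'*w') (ex : t*x = t'*x') (ey : t*y = t'*y') :
    (w' = w ∧ x' = x ∧ y' = y ∧ t' = t) ∨
    (w' = -w ∧ x' = -x ∧ y' = -y ∧ t' = -t) := by
  have hsq : (t' - t) * (t' + t) = 0 := by
    linear_combination t^2*h1 - t'^2*h1' - (t*w + t'*w')*ew - 3*(t*x + t'*x')*ex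
      - (t*y + t'*y')*ey
  rcases mul_eq_zero.mp hsq with h | h
  · left
    have ht' : t' = t := by linear_combination h
    subst ht'
    refine ⟨?_, ?_, ?_, rfl⟩
    · exact (mul_left_cancel₀ ht ew).symm
    · exact (mul_left_cancel₀ ht ex).symm
    · exact (mul_left_cancel₀ ht ey).symm
  · right
    have ht' : t' = -t := by linear_combination h
    subst ht'
    refine ⟨?_, ?_, ?_, rfl⟩
    · have : t * w = t * (-w') := by linear_combination ew
      have := mul_left_cancel₀ ht this
      linear_combination this
    · have : t * x = t * (-x') := by linear_combination ex
      have := mul_left_cancel₀ ht this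
      linear_combination this
    · have : t * y = t * (-y') := by linear_combination ey
      have := mul_left_cancel₀ ht this
      linear_combination this

private lemma auxB {K : Type*} [Field K] {w x y s s' : K}
    (h1 : w^2 + 3*x^2 + y^2 = 1)
    (e1 : s*w = s'*w) (e2 : s*x = s'*x) (e3 : s*y = s'*y) : s' = s := by
  linear_combination (s - s')*h1 - w*e1 - 3*x*e2 - y*e3

/-- The parameterization `F` of the slice `X₀` by
`{((w,x,y),(a,b,c)) : w²+3x²+y² = 1, abc - a - b - c = 0}` is 2-to-1 away from
`a = b = c = 0`: equal values of `F` force the parameters to agree up to a global sign. -/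
theorem stmt17 {K : Type*} [Field K] (hchar2 : (2 : K) ≠ 0) (hchar3 : (3 : K) ≠ 0)
    (w x y a b c w' x' y' a' b' c' : K)
    (h1 : w^2 + 3*x^2 + y^2 = 1) (h2 : a*b*c - a - b - c = 0)
    (h1' : w'^2 + 3*x'^2 + y'^2 = 1) (h2' : a'*b'*c' - a' - b' - c' = 0)
    (hne : ¬(a = 0 ∧ b = 0 ∧ c = 0))
    (hF : (!![-3*a*x, -b*y, 0;
              a*w, 0, c*y;
              0, b*w, -3*c*x;
              -a*y, b*x, c*w] : Matrix (Fin 4) (Fin 3) K) =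
          !![-3*a'*x', -b'*y', 0;
             a'*w', 0, c'*y';
             0, b'*w', -3*c'*x';
             -a'*y', b'*x', c'*w']) :
    (w' = w ∧ x' = x ∧ y' = y ∧ a' = a ∧ b' = b ∧ c' = c) ∨
    (w' = -w ∧ x' = -x ∧ y' = -y ∧ a' = -a ∧ b' = -b ∧ c' = -c) := by
  have e00 := congrFun (congrFun hF 0) 0
  have e01 := congrFun (congrFun hF 0) 1
  have e10 := congrFun (congrFun hF 1) 0
  have e12 := congrFun (congrFun hF 1) 2
  have e21 := congrFun (congrFun hF 2) 1
  have e22 := congrFun (congrFun hF 2) 2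
  have e30 := congrFun (congrFun hF 3) 0
  have e31 := congrFun (congrFun hF 3) 1
  have e32 := congrFun (congrFun hF 3) 2
  simp at e00 e01 e10 e12 e21 e22 e30 e31 e32
  -- the nine entry equations
  have eaw : a*w = a'*w' := by linear_combination e10
  have eax : a*x = a'*x' :=
    mul_left_cancel₀ hchar3 (by linear_combination e00)
  have eay : a*y = a'*y' := by linear_combination e30
  have ebw : b*w = b'*w' := by linear_combination e21
  have ebx : b*x = b'*x' := by linear_combination e31
  have eby : b*y = b'*y' := by linear_combination e01
  have ecw : c*w = c'*w' := by linear_combination e32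
  have ecx : c*x = c'*x' :=
    mul_left_cancel₀ hchar3 (by linear_combination e22)
  have ecy : c*y = c'*y' := by linear_combination e12
  by_cases ha : a = 0
  · by_cases hb : b = 0
    · have hc : c ≠ 0 := fun hc => hne ⟨ha, hb, hc⟩
      rcases auxA h1 h1' hc ecw ecx ecy with ⟨hw, hx, hy, hcc⟩ | ⟨hw, hx, hy, hcc⟩
      · subst hw hx hy
        exact Or.inl ⟨rfl, rfl, rfl, auxB h1 eaw eax eay, auxB h1 ebw ebx eby, hcc⟩
      · subst hw hx hy
        refine Or.inr ⟨rfl, rfl, rfl, ?_, ?_, hcc⟩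
        · have := auxB (s := a) (s' := -a') h1 (by linear_combination eaw)
            (by linear_combination eax) (by linear_combination eay)
          linear_combination -this
        · have := auxB (s := b) (s' := -b') h1 (by linear_combination ebw)
            (by linear_combination ebx) (by linear_combination eby)
          linear_combination -this
    · rcases auxA h1 h1' hb ebw ebx eby with ⟨hw, hx, hy, hbb⟩ | ⟨hw, hx, hy, hbb⟩
      · subst hw hx hy
        exact Or.inl ⟨rfl, rfl, rfl, auxB h1 eaw eax eay, hbb, auxB h1 ecw ecx ecy⟩
      · subst hw hx hy
        refine Or.inr ⟨rfl, rfl, rfl, ?_, hbb, ?_⟩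
        · have := auxB (s := a) (s' := -a') h1 (by linear_combination eaw)
            (by linear_combination eax) (by linear_combination eay)
          linear_combination -this
        · have := auxB (s := c) (s' := -c') h1 (by linear_combination ecw)
            (by linear_combination ecx) (by linear_combination ecy)
          linear_combination -this
  · rcases auxA h1 h1' ha eaw eax eay with ⟨hw, hx, hy, haa⟩ | ⟨hw, hx, hy, haa⟩
    · subst hw hx hy
      exact Or.inl ⟨rfl, rfl, rfl, haa, auxB h1 ebw ebx eby, auxB h1 ecw ecx ecy⟩
    · subst hw hx hy
      refine Or.inr ⟨rfl, rfl, rfl, haa, ?_, ?_⟩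
      · have := auxB (s := b) (s' := -b') h1 (by linear_combination ebw)
          (by linear_combination ebx) (by linear_combination eby)
        linear_combination -this
      · have := auxB (s := c) (s' := -c') h1 (by linear_combination ecw)
          (by linear_combination ecx) (by linear_combination ecy)
        linear_combination -this
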